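/- Let c be non-recurrent for T_s (s ∈ (√2,2]) and let δ > 0 be less than inf_i |c − cᵢ|. Then for every i ≥ 1 and every interval J ⊇ (cᵢ − δ, cᵢ + δ), and every n ≥ 0, the map T_sⁿ restricted to J is not ε-symmetric with centre cᵢ, where ε = ε(δ) is the constant from the non-symmetry proposition. -/

import Mathlib

noncomputable def tent (s : ℝ) : ℝ → ℝ := fun x => min (s * x) (s * (1 - x))

def EpsSymmetric (f : ℝ → ℝ) (a b m ε : ℝ) : Prop :=
  ∃ i : ℝ → ℝ, ContinuousOn i (Set.Icc a b) ∧
    Set.BijOn i (Set.Icc a b) (Set.Icc a b) ∧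
    i a = b ∧ i b = a ∧ i m = m ∧
    ∀ x ∈ Set.Icc a b, |f x - f (i x)| < ε

lemma tent_left {s x : ℝ} (hs : 0 ≤ s) (hx : x ≤ 1/2) : tent s x = s * x :=
  min_eq_left (by nlinarith)

lemma tent_right {s x : ℝ} (hs : 0 ≤ s) (hx : 1/2 ≤ x) : tent s x = s * (1 - x) :=
  min_eq_right (by nlinarith)

/-- Local affinity of `T_s^n` around a point whose forward orbit stays `δ`-away
from the critical point `1/2`. -/
lemma tent_iter_affine {s δ : ℝ} (hs : 1 < s) (hδ : 0 < δ) (m : ℝ)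
    (Hm : ∀ j : ℕ, δ < |1/2 - (tent s)^[j] m|) :
    ∀ n : ℕ, ∃ σ : ℝ, (σ = 1 ∨ σ = -1) ∧
      ∀ x : ℝ, |x - m| ≤ δ / s ^ n →
        (tent s)^[n] x = (tent s)^[n] m + σ * s ^ n * (x - m) := by
  have hs0 : (0:ℝ) < s := lt_trans one_pos hs
  intro n
  induction n with
  | zero => exact ⟨1, Or.inl rfl, fun x _ => by simp⟩
  | succ n ih =>
    obtain ⟨σ, hσ, haff⟩ := ih
    have hsn : (0:ℝ) < s ^ n := pow_pos hs0 n
    have hsn1 : (0:ℝ) < s ^ (n+1) := pow_pos hs0 (n+1)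
    set cm := (tent s)^[n] m with hcm
    have hmono : δ / s ^ (n+1) ≤ δ / s ^ n :=
      div_le_div_of_nonneg_left (le_of_lt hδ) hsn
        (pow_le_pow_right₀ (le_of_lt hs) (Nat.le_succ n))
    have key : ∀ x : ℝ, |x - m| ≤ δ / s ^ (n+1) →
        |(tent s)^[n] x - cm| < δ := by
      intro x hx
      rw [haff x (le_trans hx hmono)]
      have habs : |cm + σ * s ^ n * (x - m) - cm| = s ^ n * |x - m| := by
        have : cm + σ * s ^ n * (x - m) - cm = σ * (s ^ n * (x - m)) := by ring
        rw [this, abs_mul, abs_mul, abs_of_pos hsn]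
        rcases hσ with h | h <;> simp [h]
      rw [habs]
      have h2 : s ^ n * |x - m| ≤ s ^ n * (δ / s ^ (n+1)) :=
        mul_le_mul_of_nonneg_left hx (le_of_lt hsn)
      have h3 : s ^ n * (δ / s ^ (n+1)) < δ := by
        rw [pow_succ]
        have : s ^ n * (δ / (s ^ n * s)) = δ / s := by field_simp
        rw [this]
        exact div_lt_self hδ hs
      exact lt_of_le_of_lt h2 h3
    have Hcm : δ < |1/2 - cm| := Hm n
    rcases abs_cases ((1:ℝ)/2 - cm) with ⟨heq, _⟩ | ⟨heq, _⟩
    · -- cm < 1/2 - δ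
      have hcmlt : cm < 1/2 - δ := by rw [heq] at Hcm; linarith
      refine ⟨σ, hσ, fun x hx => ?_⟩
      have hy := key x hx
      have hylt : (tent s)^[n] x ≤ 1/2 := by
        rcases abs_lt.mp hy with ⟨_, h2⟩; linarith
      rw [Function.iterate_succ_apply', Function.iterate_succ_apply',
        tent_left (le_of_lt hs0) hylt, tent_left (le_of_lt hs0) (le_of_lt (by linarith : cm < 1/2)),
        haff x (le_trans hx hmono)]
      rw [pow_succ]; ring
    · -- cm > 1/2 + δ
      have hcmgt : 1/2 + δ < cm := by rw [heq] at Hcm; linarith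
      refine ⟨-σ, by rcases hσ with h | h <;> simp [h], fun x hx => ?_⟩
      · have hy := key x hx
        have hygt : 1/2 ≤ (tent s)^[n] x := by
          rcases abs_lt.mp hy with ⟨h1, _⟩; linarith
        rw [Function.iterate_succ_apply', Function.iterate_succ_apply',
          tent_right (le_of_lt hs0) hygt,
          tent_right (le_of_lt hs0) (le_of_lt (by linarith : (1:ℝ)/2 < cm)),
          haff x (le_trans hx hmono)]
        rw [pow_succ]; ring

/-- (Corollary 3.16) Let `c = 1/2` be non-recurrent for `T_s`, `s ∈ (√2,2]`,
and let `δ > 0` be less than `inf_i |c - cᵢ|`. Then there is `ε > 0` such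
that for every `i ≥ 1`, every interval `J = [a,b] ⊇ (cᵢ - δ, cᵢ + δ)` and
every `n ≥ 0`, the map `T_s^n|_J` is not `ε`-symmetric with centre `cᵢ`. -/
theorem no_eps_symmetry_at_critical_orbit (s : ℝ)
    (hs : s ∈ Set.Ioc (Real.sqrt 2) 2)
    (hnr : ∃ ε₀ > 0, ∀ n : ℕ, 1 ≤ n → ε₀ ≤ |1/2 - (tent s)^[n] (1/2)|)
    (δ : ℝ) (hδ : 0 < δ)
    (hδsmall : ∀ i : ℕ, 1 ≤ i → δ < |1/2 - (tent s)^[i] (1/2)|) :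
    ∃ ε > 0, ∀ i : ℕ, 1 ≤ i → ∀ a b : ℝ,
      Set.Ioo ((tent s)^[i] (1/2) - δ) ((tent s)^[i] (1/2) + δ) ⊆ Set.Icc a b →
      ∀ n : ℕ, ¬ EpsSymmetric ((tent s)^[n]) a b ((tent s)^[i] (1/2)) ε := by
  have hs1 : 1 < s := lt_of_le_of_lt (by
    nlinarith [Real.sq_sqrt (by norm_num : (2:ℝ) ≥ 0), Real.sqrt_nonneg 2,
      Real.one_le_sqrt.mpr (by norm_num : (1:ℝ) ≤ 2)] : (1:ℝ) ≤ Real.sqrt 2) hs.1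
  refine ⟨δ, hδ, fun i hi a b hJ n hsym => ?_⟩
  set m := (tent s)^[i] (1/2) with hm
  -- the closed interval [m-δ, m+δ] is inside [a,b]
  have hIcc : Set.Icc (m - δ) (m + δ) ⊆ Set.Icc a b := by
    have := closure_minimal hJ isClosed_Icc
    rwa [closure_Ioo (by linarith : m - δ ≠ m + δ)] at this
  have ha : a ≤ m - δ := (hIcc ⟨le_refl _, by linarith⟩).1
  have hb : m + δ ≤ b := (hIcc ⟨by linarith, le_refl _⟩).2
  have hab : a ≤ b := by linarith
  -- orbit of m stays δ-away from 1/2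
  have Hm : ∀ j : ℕ, δ < |1/2 - (tent s)^[j] m| := by
    intro j
    have h1 : (tent s)^[j + i] (1/2) = (tent s)^[j] m := Function.iterate_add_apply _ j i _
    have := hδsmall (j + i) (le_trans hi (Nat.le_add_left i j))
    rwa [h1] at this
  obtain ⟨σ, hσ, haff⟩ := tent_iter_affine hs1 hδ m Hm n
  set r := δ / s ^ n with hr
  have hsn : (0:ℝ) < s ^ n := pow_pos (lt_trans one_pos hs1) n
  have hr0 : 0 < r := div_pos hδ hsn
  have hsnr : s ^ n * r = δ := by rw [hr]; field_simp [hsn.ne']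
  have hrδ : r ≤ δ := by
    rw [hr]
    calc δ / s ^ n ≤ δ / 1 := div_le_div_of_nonneg_left hδ.le one_pos (one_le_pow₀ hs1.le)
    _ = δ := div_one δ
  obtain ⟨ι, hcont, hbij, hia, hib, him, hsymm⟩ := hsym
  -- ι is strictly decreasing
  have hanti : StrictAntiOn ι (Set.Icc a b) := by
    apply ContinuousOn.strictAntiOn_of_injOn_Icc hab _ hcont hbij.injOn
    rw [hia, hib]; linarith
  -- membership facts
  have hmr_mem : m - r ∈ Set.Icc a b := ⟨by linarith, by linarith⟩
  have hm_mem : m ∈ Set.Icc a b := ⟨by linarith, by linarith⟩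
  have hmpr_mem : m + r ∈ Set.Icc a b := ⟨by linarith, by linarith⟩
  have hgt : m < ι (m - r) := by
    have := hanti hmr_mem hm_mem (by linarith)
    rwa [him] at this
  rcases le_or_gt (m + r) (ι (m - r)) with hcase | hcase
  · -- there is x* ∈ [m-r, m] with ι x* = m + r
    have hIVT : m + r ∈ ι '' Set.Icc (m - r) m := by
      apply intermediate_value_Icc' (by linarith : m - r ≤ m)
        (hcont.mono (Set.Icc_subset_Icc (by linarith) (by linarith)))
      rw [him]
      exact ⟨by linarith, hcase⟩
    obtain ⟨x, hxmem, hxval⟩ := hIVT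
    have hx_ab : x ∈ Set.Icc a b := ⟨by linarith [hxmem.1], by linarith [hxmem.2]⟩
    have hfx : (tent s)^[n] x = (tent s)^[n] m + σ * s ^ n * (x - m) := by
      apply haff
      rw [abs_le]
      constructor <;> [linarith [hxmem.1]; linarith [hxmem.2]]
    have hfmr : (tent s)^[n] (m + r) = (tent s)^[n] m + σ * δ := by
      rw [haff (m + r) (by rw [show m + r - m = r by ring, abs_of_pos hr0])]
      rw [show m + r - m = r by ring, mul_assoc, hsnr]
    have := hsymm x hx_ab
    rw [hxval, hfx, hfmr] at this
    have habs : |(tent s)^[n] m + σ * s ^ n * (x - m) -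
        ((tent s)^[n] m + σ * δ)| = δ + s ^ n * (m - x) := by
      have h1 : (tent s)^[n] m + σ * s ^ n * (x - m) - ((tent s)^[n] m + σ * δ)
          = σ * (s ^ n * (x - m) - δ) := by ring
      rw [h1, abs_mul]
      have h2 : |s ^ n * (x - m) - δ| = δ + s ^ n * (m - x) := by
        rw [abs_of_nonpos (by nlinarith [hxmem.2] : s ^ n * (x - m) - δ ≤ 0)]
        ring
      rcases hσ with h | h <;> rw [h] <;> simp [h2]
    rw [habs] at this
    nlinarith [hxmem.2]
  · -- ι (m - r) ∈ (m, m + r)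
    set h := ι (m - r) with hh
    have hfmr : (tent s)^[n] (m - r) = (tent s)^[n] m - σ * δ := by
      rw [haff (m - r) (by rw [show m - r - m = -r by ring, abs_neg, abs_of_pos hr0])]
      rw [show m - r - m = -r by ring]
      have : σ * s ^ n * -r = -(σ * δ) := by rw [mul_assoc, show s ^ n * -r = -(s^n*r) by ring, hsnr]; ring
      rw [this]; ring
    have hfh : (tent s)^[n] h = (tent s)^[n] m + σ * s ^ n * (h - m) := by
      apply haff
      rw [abs_of_pos (by linarith : (0:ℝ) < h - m)]
      linarith
    have := hsymm (m - r) hmr_mem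
    rw [← hh, hfmr, hfh] at this
    have habs : |(tent s)^[n] m - σ * δ - ((tent s)^[n] m + σ * s ^ n * (h - m))|
        = δ + s ^ n * (h - m) := by
      have h1 : (tent s)^[n] m - σ * δ - ((tent s)^[n] m + σ * s ^ n * (h - m))
          = -σ * (δ + s ^ n * (h - m)) := by ring
      rw [h1, abs_mul]
      have h2 : |δ + s ^ n * (h - m)| = δ + s ^ n * (h - m) := by
        rw [abs_of_nonneg]; nlinarith
      rcases hσ with hσ' | hσ' <;> rw [hσ'] <;> simp [h2]
    rw [habs] at this
    nlinarith
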